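/- Let θ, λ, f, h > 0, B ∈ R^n, σ ∈ R^{n×d} with Σ = σσᵀ positive definite, and let Π ⊆ R^n be a nonempty closed convex cone with image cone Π_σ = {σᵀπ : π ∈ Π}. Set ξ = σᵀΣ⁻¹B and let ξ_c be the projection of ξ onto Π_σ. Then the maximizer over π ∈ Π of F(π) := h·πᵀB − (θh²)/(2λf)·πᵀΣπ is π* = (λf)/(θh)·Σ⁻¹σξ_c, and the maximum value is (λf)/(2θ)·‖ξ_c‖². -/

import Mathlib

open RealInnerProductSpace

/-- Outer maximization of the HJBI equation (reduced form in `v = σᵀπ ∈ Π_σ`):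
    the maximizer over the cone `C = Π_σ` of `G(v) = h⟪v,ξ⟫ - (θh²)/(2λf)‖v‖²`
    is `v* = (λf)/(θh) ξc` where `ξc = Proj_C ξ`, with maximum value
    `(λf)/(2θ) ‖ξc‖²`. -/
theorem hjbi_outer_maximization {d : ℕ} (lam θ f h : ℝ)
    (hlam : 0 < lam) (hθ : 0 < θ) (hf : 0 < f) (hh : 0 < h)
    (C : Set (EuclideanSpace ℝ (Fin d))) (hC_ne : C.Nonempty)
    (hC_closed : IsClosed C) (hC_convex : Convex ℝ C)
    (hC_cone : ∀ k : ℝ, 0 ≤ k → ∀ v ∈ C, k • v ∈ C)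
    (hC_zero : (0 : EuclideanSpace ℝ (Fin d)) ∈ C)
    (ξ ξc : EuclideanSpace ℝ (Fin d)) (hmem : ξc ∈ C)
    (hmin : ∀ v ∈ C, ‖ξ - ξc‖ ≤ ‖ξ - v‖) :
    let G : EuclideanSpace ℝ (Fin d) → ℝ :=
      fun v => h * ⟪v, ξ⟫ - (θ * h ^ 2) / (2 * lam * f) * ‖v‖ ^ 2
    let vstar : EuclideanSpace ℝ (Fin d) := ((lam * f) / (θ * h)) • ξc
    vstar ∈ C ∧ (∀ v ∈ C, G v ≤ G vstar) ∧
      G vstar = (lam * f) / (2 * θ) * ‖ξc‖ ^ 2 := by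
  intro G vstar
  set k : ℝ := (lam * f) / (θ * h) with hk_def
  have hk : (0:ℝ) < k := by positivity
  set c : ℝ := (θ * h ^ 2) / (2 * lam * f) with hc_def
  have hc : (0:ℝ) < c := by positivity
  -- projection characterization
  have hinf : ‖ξ - ξc‖ = ⨅ w : C, ‖ξ - w‖ := by
    haveI : Nonempty ↑C := ⟨⟨ξc, hmem⟩⟩
    apply le_antisymm
    · exact le_ciInf fun w => hmin w w.2
    · exact ciInf_le ⟨0, by rintro x ⟨w, rfl⟩; exact norm_nonneg _⟩ (⟨ξc, hmem⟩ : C)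
  have hproj : ∀ v ∈ C, ⟪ξ - ξc, v - ξc⟫ ≤ 0 :=
    (norm_eq_iInf_iff_real_inner_le_zero hC_convex hmem).mp hinf
  have hperp : ⟪ξ - ξc, ξc⟫ = 0 := by
    have h1 := hproj ((2:ℝ) • ξc) (hC_cone 2 (by norm_num) ξc hmem)
    have h2 := hproj 0 hC_zero
    have e1 : (2:ℝ) • ξc - ξc = ξc := by
      rw [two_smul]; abel
    rw [e1] at h1
    rw [zero_sub, inner_neg_right] at h2
    linarith
  have hle : ∀ v ∈ C, ⟪ξ - ξc, v⟫ ≤ 0 := by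
    intro v hv
    have := hproj v hv
    rw [inner_sub_right, hperp] at this
    linarith
  have hinner : ∀ v : EuclideanSpace ℝ (Fin d), ⟪v, ξ⟫ = ⟪v, ξ - ξc⟫ + ⟪v, ξc⟫ := by
    intro v; rw [inner_sub_right]; ring
  have hξξc : ⟪ξc, ξ⟫ = ‖ξc‖ ^ 2 := by
    have : ⟪ξc, ξ - ξc⟫ = 0 := by rw [real_inner_comm]; exact hperp
    rw [hinner ξc, this, real_inner_self_eq_norm_sq]; ring
  have hmemv : vstar ∈ C := hC_cone k hk.le ξc hmem
  have hck : 2 * c * k = h := by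
    rw [hc_def, hk_def]
    field_simp
  have hck2 : c * k ^ 2 = (lam * f) / (2 * θ) := by
    rw [hc_def, hk_def]
    field_simp
  have hGstar : G vstar = (lam * f) / (2 * θ) * ‖ξc‖ ^ 2 := by
    have h1 : ⟪vstar, ξ⟫ = k * ‖ξc‖ ^ 2 := by
      rw [show vstar = k • ξc from rfl, real_inner_smul_left, hξξc]
    have h2 : ‖vstar‖ ^ 2 = k ^ 2 * ‖ξc‖ ^ 2 := by
      rw [show vstar = k • ξc from rfl, norm_smul, Real.norm_eq_abs, abs_of_pos hk]
      ring
    show h * ⟪vstar, ξ⟫ - c * ‖vstar‖ ^ 2 = (lam * f) / (2 * θ) * ‖ξc‖ ^ 2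
    rw [h1, h2, ← hck, ← hck2]
    ring
  refine ⟨hmemv, ?_, hGstar⟩
  intro v hv
  have hsq : (0:ℝ) ≤ ‖v - k • ξc‖ ^ 2 := sq_nonneg _
  have hexp : ‖v - k • ξc‖ ^ 2 = ‖v‖ ^ 2 - 2 * k * ⟪v, ξc⟫ + k ^ 2 * ‖ξc‖ ^ 2 := by
    rw [@norm_sub_sq_real, real_inner_smul_right, norm_smul, Real.norm_eq_abs,
      abs_of_pos hk]
    ring
  have hbound : ⟪v, ξ - ξc⟫ ≤ 0 := by
    rw [real_inner_comm]; exact hle v hv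
  have : G v ≤ h * ⟪v, ξc⟫ - c * ‖v‖ ^ 2 := by
    show h * ⟪v, ξ⟫ - c * ‖v‖ ^ 2 ≤ _
    rw [hinner v]
    nlinarith
  rw [hGstar]
  rw [hexp] at hsq
  have key : 0 ≤ c * ‖v‖ ^ 2 - 2 * c * k * ⟪v, ξc⟫ + c * k ^ 2 * ‖ξc‖ ^ 2 := by
    nlinarith [mul_nonneg hc.le hsq]
  have key2 : 0 ≤ c * ‖v‖ ^ 2 - h * ⟪v, ξc⟫ + lam * f / (2 * θ) * ‖ξc‖ ^ 2 := by
    rw [← hck, ← hck2]; linarith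
  have hGv : G v = h * ⟪v, ξ⟫ - c * ‖v‖ ^ 2 := rfl
  linarith
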